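/- The power series ∑_{j=1}^∞ (-1)^{j+1} (2j² + 5j) z^{2j+2} / (2j+6)! , evaluated at z = 2πα, satisfies (4/π²) ∑_{j=1}^∞ (-1)^{j+1} (2πα)^{2j+2} (2j²+5j)/(2j+6)! = (6/π⁴) · ((2π²α² − 3) sin²(πα) + 3πα sin(2πα) + (πα)⁴ − 3(πα)²) / (12 (πα)⁴) · π², i.e. equals (1/(2π²)) · ((2x² − 3) sin²x + 3x sin(2x) + x⁴ − 3x²)/x⁴ with x = πα, for all real α ≠ 0. -/

import Mathlib

open Nat

lemma cgg_key (y : ℝ) (hy : y ≠ 0) (j : ℕ) :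
    (-1 : ℝ) ^ (j + 1 + 1) * y ^ (2 * (j + 1) + 2) *
          (2 * (j + 1 : ℕ) ^ 2 + 5 * (j + 1 : ℕ)) / (2 * (j + 1) + 6)!
    = (-1 / (2 * y ^ 2)) * ((-1 : ℝ) ^ (j + 3) * y ^ (2 * (j + 3)) / (2 * (j + 3))!)
      + (3 / y ^ 3) * ((-1 : ℝ) ^ (j + 3) * y ^ (2 * (j + 3) + 1) / (2 * (j + 3) + 1)!)
      + (3 / y ^ 4) * ((-1 : ℝ) ^ (j + 4) * y ^ (2 * (j + 4)) / (2 * (j + 4))!) := by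
  have e1 : 2 * (j + 1) + 6 = 2 * j + 5 + 1 + 1 + 1 := by omega
  have e2 : 2 * (j + 3) = 2 * j + 5 + 1 := by omega
  have e3 : 2 * (j + 3) + 1 = 2 * j + 5 + 1 + 1 := by omega
  have e4 : 2 * (j + 4) = 2 * j + 5 + 1 + 1 + 1 := by omega
  have e0 : 2 * (j + 1) + 2 = 2 * j + 4 := by omega
  rw [e0, e1, e4, e3, e2, factorial_succ, factorial_succ, factorial_succ]
  have h5 : ((2 * j + 5)! : ℝ) ≠ 0 := by exact_mod_cast (2 * j + 5).factorial_ne_zero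
  push_cast
  field_simp
  ring

theorem cgg_series_identity (α : ℝ) (hα : α ≠ 0) :
    (4 / Real.pi ^ 2) *
      ∑' j : ℕ,
        (-1 : ℝ) ^ (j + 1 + 1) * (2 * Real.pi * α) ^ (2 * (j + 1) + 2) *
          (2 * (j + 1 : ℕ) ^ 2 + 5 * (j + 1 : ℕ)) / (2 * (j + 1) + 6)!
    = (1 / (2 * Real.pi ^ 2)) *
        ((2 * (Real.pi * α) ^ 2 - 3) * Real.sin (Real.pi * α) ^ 2 +
            3 * (Real.pi * α) * Real.sin (2 * (Real.pi * α)) +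
            (Real.pi * α) ^ 4 - 3 * (Real.pi * α) ^ 2) /
          (Real.pi * α) ^ 4 := by
  set y : ℝ := 2 * Real.pi * α with hydef
  have hy : y ≠ 0 := by
    simp only [hydef]
    positivity
  have hcos := Real.hasSum_cos y
  have hsin := Real.hasSum_sin y
  have h1 : HasSum (fun j : ℕ => (-1 : ℝ) ^ (j + 3) * y ^ (2 * (j + 3)) / (2 * (j + 3))!)
      (Real.cos y - ∑ i ∈ Finset.range 3, (-1 : ℝ) ^ i * y ^ (2 * i) / (2 * i)!) :=
    (hasSum_nat_add_iff' 3).2 hcos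
  have h2 : HasSum (fun j : ℕ => (-1 : ℝ) ^ (j + 3) * y ^ (2 * (j + 3) + 1) / (2 * (j + 3) + 1)!)
      (Real.sin y - ∑ i ∈ Finset.range 3, (-1 : ℝ) ^ i * y ^ (2 * i + 1) / (2 * i + 1)!) :=
    (hasSum_nat_add_iff' 3).2 hsin
  have h3 : HasSum (fun j : ℕ => (-1 : ℝ) ^ (j + 4) * y ^ (2 * (j + 4)) / (2 * (j + 4))!)
      (Real.cos y - ∑ i ∈ Finset.range 4, (-1 : ℝ) ^ i * y ^ (2 * i) / (2 * i)!) :=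
    (hasSum_nat_add_iff' 4).2 hcos
  have hS := ((h1.mul_left (-1 / (2 * y ^ 2))).add (h2.mul_left (3 / y ^ 3))).add
    (h3.mul_left (3 / y ^ 4))
  have hS' : HasSum (fun j : ℕ =>
      (-1 : ℝ) ^ (j + 1 + 1) * y ^ (2 * (j + 1) + 2) *
        (2 * (j + 1 : ℕ) ^ 2 + 5 * (j + 1 : ℕ)) / (2 * (j + 1) + 6)!)
      ((-1 / (2 * y ^ 2)) *
          (Real.cos y - ∑ i ∈ Finset.range 3, (-1 : ℝ) ^ i * y ^ (2 * i) / (2 * i)!)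
        + (3 / y ^ 3) *
          (Real.sin y - ∑ i ∈ Finset.range 3, (-1 : ℝ) ^ i * y ^ (2 * i + 1) / (2 * i + 1)!)
        + (3 / y ^ 4) *
          (Real.cos y - ∑ i ∈ Finset.range 4, (-1 : ℝ) ^ i * y ^ (2 * i) / (2 * i)!)) := by
    rw [funext (cgg_key y hy)]
    exact hS
  rw [hS'.tsum_eq]
  have hsums3 : (∑ i ∈ Finset.range 3, (-1 : ℝ) ^ i * y ^ (2 * i) / (2 * i)!)
      = 1 - y ^ 2 / 2 + y ^ 4 / 24 := by
    simp [Finset.sum_range_succ, Nat.factorial]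
    ring
  have hsums3' : (∑ i ∈ Finset.range 3, (-1 : ℝ) ^ i * y ^ (2 * i + 1) / (2 * i + 1)!)
      = y - y ^ 3 / 6 + y ^ 5 / 120 := by
    simp [Finset.sum_range_succ, Nat.factorial]
    ring
  have hsums4 : (∑ i ∈ Finset.range 4, (-1 : ℝ) ^ i * y ^ (2 * i) / (2 * i)!)
      = 1 - y ^ 2 / 2 + y ^ 4 / 24 - y ^ 6 / 720 := by
    simp [Finset.sum_range_succ, Nat.factorial]
    ring
  rw [hsums3, hsums3', hsums4]
  have hx : Real.pi * α ≠ 0 := by positivity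
  have hyx : y = 2 * (Real.pi * α) := by rw [hydef]; ring
  rw [hyx, Real.cos_two_mul, Real.sin_two_mul, Real.sin_sq]
  field_simp
  ring
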